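/- Let b ≥ 2, m ≥ 1, d ≥ 2, n = b^m, and let x̃_0,…,x̃_{n−1} be the digital net in base b whose generator matrices are permutation matrices; i.e., writing i = ∑_k a_{i,k} b^{k−1}, set x̃_{ij} = ∑_{k=1}^m b^{−k} a_{i,π_j(k)} for permutations π_j of {1,…,m}. Then the reflected shifted points x_{ij} = 1 − (1/n + x̃_{ij}) form an NNLD point set. -/

import Mathlib

open Finset FinsetFamily

private lemma harris_upper {L : Type*} [DistribLattice L] [Fintype L] [DecidableEq L]
    {ι : Type*} [DecidableEq ι] (s : Finset ι) (A : ι → Finset L)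
    (hA : ∀ i ∈ s, ∀ a ∈ A i, ∀ c, a ≤ c → c ∈ A i) :
    (∏ i ∈ s, (A i).card) * Fintype.card L ≤
      (univ.filter fun y => ∀ i ∈ s, y ∈ A i).card * Fintype.card L ^ s.card := by
  classical
  induction s using Finset.induction with
  | empty => simp
  | @insert i s hi ih =>
    have hAi := hA i (mem_insert_self i s)
    have hA' : ∀ j ∈ s, ∀ a ∈ A j, ∀ c, a ≤ c → c ∈ A j :=
      fun j hj => hA j (mem_insert_of_mem hj)
    set B := univ.filter fun y => ∀ j ∈ s, y ∈ A j with hB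
    have hBup : ∀ a ∈ B, ∀ c, a ≤ c → c ∈ B := by
      intro a ha c hac
      simp only [hB, mem_filter, mem_univ, true_and] at ha ⊢
      exact fun j hj => hA' j hj _ (ha j hj) _ hac
    have hsups : (A i ⊻ B) ⊆ A i ∩ B := by
      intro u hu
      rw [mem_sups] at hu
      obtain ⟨a, ha, c, hc, rfl⟩ := hu
      exact mem_inter.2 ⟨hAi a ha _ le_sup_left, hBup c hc _ le_sup_right⟩
    have hinfs : (A i ⊼ B).card ≤ Fintype.card L := by
      simpa using card_le_card (subset_univ (A i ⊼ B))
    have key : (A i).card * B.card ≤ Fintype.card L * (A i ∩ B).card := by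
      calc (A i).card * B.card ≤ (A i ⊼ B).card * (A i ⊻ B).card :=
            Finset.le_card_infs_mul_card_sups (A i) B
        _ ≤ Fintype.card L * (A i ∩ B).card :=
            Nat.mul_le_mul hinfs (card_le_card hsups)
    have hfilter : (univ.filter fun y => ∀ j ∈ insert i s, y ∈ A j) = A i ∩ B := by
      ext a
      simp [hB, Finset.forall_mem_insert, and_comm]
    rw [prod_insert hi, card_insert_of_notMem hi, hfilter]
    calc ((A i).card * ∏ j ∈ s, (A j).card) * Fintype.card L
        = (A i).card * ((∏ j ∈ s, (A j).card) * Fintype.card L) := by ring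
      _ ≤ (A i).card * (B.card * Fintype.card L ^ s.card) :=
          Nat.mul_le_mul_left _ (ih hA')
      _ = ((A i).card * B.card) * Fintype.card L ^ s.card := by ring
      _ ≤ (Fintype.card L * (A i ∩ B).card) * Fintype.card L ^ s.card :=
          Nat.mul_le_mul_right _ key
      _ = (A i ∩ B).card * Fintype.card L ^ (s.card + 1) := by ring

/-- If `x̃` is a digital net in base `b` whose generator matrices are permutation matrices,
i.e. `x̃_{ij} = ∑_k b^{-k} a_{i,π_j(k)}`, then the reflected shifted points
`x_{ij} = 1 - (1/n + x̃_{ij})` form an NNLD point set. -/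
theorem stmt13 (b m d : ℕ) (hb : 2 ≤ b) (hm : 1 ≤ m) (hd : 2 ≤ d)
    (π : Fin d → Equiv.Perm (Fin m))
    (x : Fin (b ^ m) → Fin d → ℝ)
    (hxdef : ∀ i j, x i j = 1 - (1 / (b ^ m : ℝ) +
      ∑ k : Fin m, (((i : ℕ) / b ^ ((π j k : ℕ)) % b : ℕ) : ℝ) * ((b : ℝ))⁻¹ ^ ((k : ℕ) + 1))) :
    ∀ z : Fin d → ℝ, (∀ j, z j ∈ Set.Icc (0:ℝ) 1) →
      ∏ j, z j ≤ (Nat.card {i : Fin (b ^ m) // ∀ j, x i j < z j} : ℝ) / (b ^ m : ℝ) := by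
  intro z hz
  classical
  have hbR : (0:ℝ) < (b:ℝ) := by exact_mod_cast (by omega : 0 < b)
  have hnR : (0:ℝ) < (b:ℝ)^m := pow_pos hbR m
  set e : (Fin m → Fin b) ≃ Fin (b ^ m) := finFunctionFinEquiv with he
  have hdig : ∀ (a : Fin m → Fin b) (p : Fin m), ((e a : ℕ) / b ^ (p:ℕ)) % b = (a p : ℕ) := by
    intro a p
    conv_rhs => rw [← e.symm_apply_apply a]
    rfl
  have hx : ∀ (a : Fin m → Fin b) (j : Fin d), x (e a) j
      = 1 - (1 / (b ^ m : ℝ) +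
        ∑ k : Fin m, ((a (π j k) : ℕ) : ℝ) * ((b : ℝ))⁻¹ ^ ((k : ℕ) + 1)) := by
    intro a j
    rw [hxdef]
    have : (∑ k : Fin m, (((e a : ℕ) / b ^ ((π j k : ℕ)) % b : ℕ) : ℝ) * ((b : ℝ))⁻¹ ^ ((k : ℕ) + 1))
        = ∑ k : Fin m, ((a (π j k) : ℕ) : ℝ) * ((b : ℝ))⁻¹ ^ ((k : ℕ) + 1) :=
      Finset.sum_congr rfl fun k _ => by rw [hdig]
    rw [this]
  set σ : Fin d → Equiv.Perm (Fin m) := fun j => Fin.revPerm.trans (π j) with hσ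
  set T : (Fin m → Fin b) → Fin d → Fin (b ^ m) := fun a j => e (fun s => a (σ j s)) with hT
  have hpow : ∀ k : Fin m, ((b:ℝ))⁻¹ ^ ((k:ℕ)+1) = (b:ℝ)^((Fin.rev k : ℕ)) / (b:ℝ)^m := by
    intro k
    have hkm : (b:ℝ)^m = (b:ℝ)^((Fin.rev k : ℕ)) * (b:ℝ)^(((k:ℕ))+1) := by
      rw [← pow_add]
      congr 1
      rw [Fin.val_rev]; omega
    rw [eq_div_iff (ne_of_gt hnR), inv_pow, inv_mul_eq_div,
      div_eq_iff (pow_ne_zero _ (ne_of_gt hbR))]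
    exact hkm
  have hS : ∀ a j, (∑ k : Fin m, ((a (π j k) : ℕ) : ℝ) * ((b : ℝ))⁻¹ ^ ((k : ℕ) + 1))
      = ((T a j : ℕ) : ℝ) / (b:ℝ)^m := by
    intro a j
    have h1 : ((T a j : ℕ) : ℝ) = ∑ s : Fin m, ((a (σ j s) : ℕ) : ℝ) * (b:ℝ)^(s:ℕ) := by
      simp only [hT, he, finFunctionFinEquiv_apply]
      push_cast
      rfl
    rw [h1, Finset.sum_div]
    refine Fintype.sum_equiv Fin.revPerm _ _ ?_
    intro k
    rw [hpow k]
    simp [hσ, Equiv.trans_apply, Fin.revPerm_apply, Fin.rev_rev, mul_div_assoc]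
  have hrev : ∀ t : Fin (b ^ m), ((t.rev : ℕ) : ℝ) = (b:ℝ)^m - 1 - ((t : ℕ) : ℝ) := by
    intro t
    rw [Fin.val_rev, Nat.cast_sub t.is_lt]
    push_cast
    ring
  have hmem : ∀ a j, (x (e a) j < z j ↔ (((T a j).rev : ℕ) : ℝ) < (b:ℝ)^m * z j) := by
    intro a j
    rw [hx, hS, hrev]
    rw [← add_div, sub_lt_comm, lt_div_iff₀ hnR]
    constructor <;> intro h <;> nlinarith [h]
  set A : Fin d → Finset (Fin m → Fin b) :=
    fun j => Finset.univ.filter (fun a => x (e a) j < z j) with hA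
  have hup : ∀ j : Fin d, ∀ a ∈ A j, ∀ c, a ≤ c → c ∈ A j := by
    intro j a ha c hac
    simp only [hA, Finset.mem_filter, Finset.mem_univ, true_and] at ha ⊢
    refine lt_of_le_of_lt ?_ ha
    rw [hx, hx]
    apply sub_le_sub_left
    apply add_le_add le_rfl
    apply Finset.sum_le_sum
    intro k _
    have h1 : ((a (π j k) : ℕ) : ℝ) ≤ ((c (π j k) : ℕ) : ℝ) := by
      exact_mod_cast hac (π j k)
    have hcoef : (0:ℝ) ≤ ((b:ℝ))⁻¹ ^ ((k:ℕ)+1) := by positivity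
    exact mul_le_mul_of_nonneg_right h1 hcoef
  have hcount : ∀ j : Fin d, (b:ℝ)^m * z j ≤ ((A j).card : ℝ) := by
    intro j
    set c : ℕ := min (b ^ m) ⌈(b:ℝ)^m * z j⌉₊ with hc
    have hcn : c ≤ b ^ m := min_le_left _ _
    set f : Fin c → (Fin m → Fin b) :=
      fun l => fun p => (e.symm (Fin.rev ⟨l.1, lt_of_lt_of_le l.2 hcn⟩)) ((σ j).symm p) with hf
    have hTf : ∀ l : Fin c, T (f l) j = Fin.rev ⟨l.1, lt_of_lt_of_le l.2 hcn⟩ := by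
      intro l
      have hfun : (fun s => (f l) (σ j s))
          = e.symm (Fin.rev ⟨l.1, lt_of_lt_of_le l.2 hcn⟩) := by
        funext s
        simp only [hf]
        rw [Equiv.symm_apply_apply]
      simp only [hT]
      rw [hfun, Equiv.apply_symm_apply]
    have hfmem : ∀ l ∈ (Finset.univ : Finset (Fin c)), f l ∈ A j := by
      intro l _
      simp only [hA, Finset.mem_filter, Finset.mem_univ, true_and]
      rw [hmem, hTf, Fin.rev_rev]
      have h1 : l.1 < ⌈(b:ℝ)^m * z j⌉₊ := lt_of_lt_of_le l.2 (min_le_right _ _)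
      exact_mod_cast Nat.lt_ceil.1 h1
    have hfinj : Set.InjOn f (Finset.univ : Finset (Fin c)) := by
      intro l1 _ l2 _ hfl
      have h1 : T (f l1) j = T (f l2) j := by rw [hfl]
      rw [hTf, hTf] at h1
      have h3 := Fin.rev_injective h1
      have h4 := congrArg (Fin.val (n := b ^ m)) h3
      exact Fin.ext h4
    have hinj : c ≤ (A j).card := by
      have := Finset.card_le_card_of_injOn f hfmem hfinj
      simpa using this
    have hcR : (b:ℝ)^m * z j ≤ (c : ℝ) := by
      rw [hc]
      push_cast [Nat.cast_min]
      apply le_min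
      · nlinarith [(hz j).2, hnR]
      · exact Nat.le_ceil _
    calc (b:ℝ)^m * z j ≤ (c:ℝ) := hcR
      _ ≤ ((A j).card : ℝ) := by exact_mod_cast hinj
  have harris := harris_upper (Finset.univ : Finset (Fin d)) A (fun i _ => hup i)
  have hcardL : Fintype.card (Fin m → Fin b) = b ^ m := by simp
  rw [hcardL, Finset.card_univ, Fintype.card_fin] at harris
  have key : (∏ j, (A j).card) * b ^ m
      ≤ Nat.card {i : Fin (b ^ m) // ∀ j, x i j < z j} * (b ^ m) ^ d := by
    refine le_trans harris (Nat.mul_le_mul_right _ (le_of_eq ?_))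
    rw [Nat.card_eq_fintype_card, ← Fintype.card_coe]
    refine Fintype.card_congr ((Equiv.subtypeEquivRight fun a => ?_).trans
      (e.subtypeEquiv fun a => Iff.rfl))
    simp [hA]
  have hprod : ∏ j, z j ≤ (∏ j, ((A j).card : ℝ)) / ((b:ℝ)^m)^d := by
    have h1 : ∏ j, z j ≤ ∏ j, (((A j).card : ℝ) / (b:ℝ)^m) := by
      apply Finset.prod_le_prod
      · intro j _; exact (hz j).1
      · intro j _
        rw [le_div_iff₀ hnR]
        nlinarith [hcount j]
    calc ∏ j, z j ≤ ∏ j, (((A j).card : ℝ) / (b:ℝ)^m) := h1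
      _ = (∏ j, ((A j).card : ℝ)) / ((b:ℝ)^m)^d := by
        rw [Finset.prod_div_distrib, Finset.prod_const, Finset.card_univ, Fintype.card_fin]
  refine le_trans hprod ?_
  rw [div_le_div_iff₀ (by positivity) hnR]
  exact_mod_cast key
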